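/- arXiv:2410.08640 — 2 statements merged into one kernel-verified Lean document; each statement's English description precedes it below -/
import Mathlib

section
/- Let 𝒳, 𝒳' ⊆ Φ be almost parabolic of spherical type with R_𝒳 = R_𝒳', and set 𝒯 = 𝒳 ∖ 𝒳', 𝒱 = 𝒳 ∩ 𝒳' (so 𝒳 = 𝒯 ⊔ 𝒱 and 𝒳' = (−𝒯) ⊔ 𝒱). Let w₀ ∈ W_𝒯 be an element satisfying w₀(𝒯) = −𝒯 (for instance the longest element of the finite Coxeter group W_𝒯). Then w₀(o_𝒳) = o_{𝒳'}. -/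
/-!
Context: `(W, S)` is a Coxeter system for the Coxeter matrix `M` (Mathlib's convention:
the entry `0` encodes `∞`).  `V = ⊕_{s ∈ S} ℝ·α_s` is realized as `S →₀ ℝ` with
`α_s = simpleRoot s`, equipped with the canonical symmetric bilinear form `bform M`.
The canonical faithful form-preserving representation `ρ : W →* GL(V)` and the map
`β ↦ r_β` assigning to each root its reflection are given as data, characterized by
the usual formulas (`hρ`, `hρinj`, `hρform`, `hr` below).
-/

noncomputable section

open scoped Real Pointwise

variable {S W : Type*}

/-- The simple root `α_s`. -/
def simpleRoot (s : S) : S →₀ ℝ := Finsupp.single s 1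

/-- The entry `⟨α_s, α_t⟩ = -cos (π / m_{s,t})` of the canonical bilinear form,
interpreted as `-1` when `m_{s,t} = ∞` (encoded by `0`). -/
def formEntry (M : CoxeterMatrix S) (s t : S) : ℝ :=
  if M s t = 0 then -1 else -Real.cos (Real.pi / (M s t : ℝ))

/-- The canonical symmetric bilinear form on `V = ⊕_{s ∈ S} ℝ·α_s`. -/
def bform (M : CoxeterMatrix S) : (S →₀ ℝ) →ₗ[ℝ] (S →₀ ℝ) →ₗ[ℝ] ℝ :=
  Finsupp.basisSingleOne.constr ℝ fun s =>
    Finsupp.basisSingleOne.constr ℝ fun t => formEntry M s t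

variable [Group W]

/-- The root system `Φ = { w (α_s) : w ∈ W, s ∈ S }`. -/
def rootSystem (ρ : W →* ((S →₀ ℝ) ≃ₗ[ℝ] (S →₀ ℝ))) : Set (S →₀ ℝ) :=
  Set.range fun p : W × S => ρ p.1 (simpleRoot p.2)

/-- A subset `𝒳 ⊆ V` is almost parabolic (AP): (AP1) the vectors of `𝒳` are linearly
independent, and (AP2) any two elements of `𝒳` are of the form `w (α_s)`, `w (α_t)` for a
common `w ∈ W`. -/
def IsAP (ρ : W →* ((S →₀ ℝ) ≃ₗ[ℝ] (S →₀ ℝ))) (𝒳 : Set (S →₀ ℝ)) : Prop :=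
  LinearIndependent ℝ ((↑) : 𝒳 → (S →₀ ℝ)) ∧
    ∀ β ∈ 𝒳, ∀ γ ∈ 𝒳, ∃ (w : W) (s t : S),
      ρ w (simpleRoot s) = β ∧ ρ w (simpleRoot t) = γ

/-- `g ∈ W` is a product of `n` elements of `T`. -/
def HasLen (T : Set W) (g : W) (n : ℕ) : Prop :=
  ∃ l : List W, (∀ x ∈ l, x ∈ T) ∧ l.prod = g ∧ l.length = n

/-- `u` has minimal word length (w.r.t. the generating set `T`) in the coset `u·H`. -/
def MinimalInCoset (T : Set W) (H : Subgroup W) (u : W) : Prop :=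
  ∀ h ∈ H, ∀ m, HasLen T (u * h) m → ∃ n ≤ m, HasLen T u n


section helpersA

variable {S : Type*}

lemma simpleRoot_eq_basis (s : S) :
    simpleRoot s = (Finsupp.basisSingleOne : Module.Basis S ℝ (S →₀ ℝ)) s := by
  simp [simpleRoot]

lemma bform_simple (M : CoxeterMatrix S) (s t : S) :
    bform M (simpleRoot s) (simpleRoot t) = formEntry M s t := by
  rw [simpleRoot_eq_basis, simpleRoot_eq_basis, bform, Module.Basis.constr_basis, Module.Basis.constr_basis]

lemma formEntry_diag (M : CoxeterMatrix S) (s : S) : formEntry M s s = 1 := by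
  simp [formEntry, M.diagonal s, Real.cos_pi]

lemma formEntry_symm (M : CoxeterMatrix S) (s t : S) : formEntry M s t = formEntry M t s := by
  simp [formEntry, M.symmetric s t]

lemma formEntry_nonpos (M : CoxeterMatrix S) {s t : S} (h : s ≠ t) : formEntry M s t ≤ 0 := by
  unfold formEntry
  split
  · norm_num
  · rename_i h0
    have h1 : M s t ≠ 1 := M.off_diagonal s t h
    have hm : 2 ≤ M s t := by omega
    have hm' : (2 : ℝ) ≤ (M s t : ℝ) := by exact_mod_cast hm
    have hc : 0 ≤ Real.cos (Real.pi / (M s t : ℝ)) := by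
      apply Real.cos_nonneg_of_mem_Icc
      constructor
      · have : 0 ≤ Real.pi / (M s t : ℝ) := by positivity
        linarith [Real.pi_pos]
      · calc Real.pi / (M s t : ℝ) ≤ Real.pi / 2 := by
              apply div_le_div_of_nonneg_left Real.pi_pos.le (by norm_num) hm'
          _ = Real.pi / 2 := rfl
    linarith

lemma bform_comm (M : CoxeterMatrix S) (x y : S →₀ ℝ) : bform M x y = bform M y x := by
  have h : bform M = (bform M).flip := by
    apply Module.Basis.ext (Finsupp.basisSingleOne : Module.Basis S ℝ (S →₀ ℝ))
    intro s
    apply Module.Basis.ext (Finsupp.basisSingleOne : Module.Basis S ℝ (S →₀ ℝ))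
    intro t
    rw [LinearMap.flip_apply, ← simpleRoot_eq_basis, ← simpleRoot_eq_basis,
      bform_simple, bform_simple, formEntry_symm]
  conv_lhs => rw [h]
  rw [LinearMap.flip_apply]

/-- An auxiliary positive definite "Euclidean" form on `S →₀ ℝ`. -/
def Eform : (S →₀ ℝ) →ₗ[ℝ] (S →₀ ℝ) →ₗ[ℝ] ℝ :=
  Finsupp.lsum ℝ fun s => LinearMap.smulRight (LinearMap.id : ℝ →ₗ[ℝ] ℝ) (Finsupp.lapply s)

lemma Eform_apply (x y : S →₀ ℝ) : Eform x y = x.sum fun s c => c * y s := by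
  rw [Eform, Finsupp.lsum_apply]
  rw [Finsupp.sum, Finsupp.sum, LinearMap.coe_sum, Finset.sum_apply]
  refine Finset.sum_congr rfl fun s _ => ?_
  simp [Finsupp.lapply]

lemma Eform_self_nonneg (x : S →₀ ℝ) : 0 ≤ Eform x x := by
  rw [Eform_apply, Finsupp.sum]
  exact Finset.sum_nonneg fun s _ => mul_self_nonneg _

lemma Eform_self_eq_zero {x : S →₀ ℝ} (h : Eform x x = 0) : x = 0 := by
  rw [Eform_apply, Finsupp.sum] at h
  have hz := (Finset.sum_eq_zero_iff_of_nonneg fun s _ => mul_self_nonneg (x s)).mp h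
  ext s
  by_cases hs : s ∈ x.support
  · exact mul_self_eq_zero.mp (hz s hs)
  · simpa using Finsupp.notMem_support_iff.mp hs

lemma no_pair_neg {V : Type*} [AddCommGroup V] [Module ℝ V] {X : Set V}
    (li : LinearIndependent ℝ ((↑) : X → V)) {γ : V} (h1 : γ ∈ X) (h2 : -γ ∈ X)
    (h0 : γ ≠ 0) : False := by
  classical
  have hne : (⟨γ, h1⟩ : X) ≠ ⟨-γ, h2⟩ := by
    intro h
    have := congrArg Subtype.val h
    simp only at this
    apply h0
    have h2γ : γ + γ = 0 := by nth_rewrite 2 [this]; simp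
    have : (2 : ℝ) • γ = 0 := by rw [two_smul]; exact h2γ
    simpa using (smul_eq_zero.mp this).resolve_left (by norm_num)
  have hl := linearIndependent_iff.mp li
    (Finsupp.single (⟨γ, h1⟩ : X) 1 + Finsupp.single (⟨-γ, h2⟩ : X) 1) (by
      rw [map_add, Finsupp.linearCombination_single, Finsupp.linearCombination_single]
      simp)
  have h3 := DFunLike.congr_fun hl (⟨γ, h1⟩ : X)
  simp [Finsupp.single_apply, Ne.symm hne] at h3

end helpersA

/-- Let `𝒳, 𝒳' ⊆ Φ` be AP of spherical type with `R_𝒳 = R_𝒳'`, and set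
`𝒯 = 𝒳 ∖ 𝒳'` (so `𝒳 = 𝒯 ⊔ 𝒱` and `𝒳' = (−𝒯) ⊔ 𝒱` with `𝒱 = 𝒳 ∩ 𝒳'`).  Let `w₀ ∈ W_𝒯`
satisfy `w₀(𝒯) = −𝒯` (e.g. the longest element of the finite Coxeter group `W_𝒯`).  Then
`w₀ (o_𝒳) = o_𝒳'`.  (The points `o_𝒳`, `o_𝒳'` are characterized as the unique vectors of
the respective spans pairing to `1` with every root of `𝒳`, resp. `𝒳'`.) -/
theorem statement8
    (M : CoxeterMatrix S) (cs : CoxeterSystem M W)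
    (ρ : W →* ((S →₀ ℝ) ≃ₗ[ℝ] (S →₀ ℝ)))
    (hρ : ∀ (s : S) (v : S →₀ ℝ),
      ρ (cs.simple s) v = v - (2 * bform M (simpleRoot s) v) • simpleRoot s)
    (hρinj : Function.Injective ρ)
    (hρform : ∀ (w : W) (x y : S →₀ ℝ), bform M (ρ w x) (ρ w y) = bform M x y)
    (r : (S →₀ ℝ) → W)
    (hr : ∀ (w : W) (s : S), r (ρ w (simpleRoot s)) = w * cs.simple s * w⁻¹)
    (𝒳 𝒳' : Set (S →₀ ℝ)) (h𝒳Φ : 𝒳 ⊆ rootSystem ρ) (h𝒳'Φ : 𝒳' ⊆ rootSystem ρ)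
    (hAP : IsAP ρ 𝒳) (hAP' : IsAP ρ 𝒳')
    (hsph : ((Subgroup.closure (r '' 𝒳) : Set W)).Finite)
    (hsph' : ((Subgroup.closure (r '' 𝒳') : Set W)).Finite)
    (hR : r '' 𝒳 = r '' 𝒳')
    (w₀ : W) (hw₀mem : w₀ ∈ Subgroup.closure (r '' (𝒳 \ 𝒳')))
    (hw₀T : ⇑(ρ w₀) '' (𝒳 \ 𝒳') = (fun v : S →₀ ℝ => -v) '' (𝒳 \ 𝒳'))
    (o𝒳 : S →₀ ℝ) (ho𝒳span : o𝒳 ∈ Submodule.span ℝ 𝒳)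
    (ho𝒳 : ∀ γ ∈ 𝒳, bform M o𝒳 γ = 1)
    (o𝒳' : S →₀ ℝ) (ho𝒳'span : o𝒳' ∈ Submodule.span ℝ 𝒳')
    (ho𝒳' : ∀ γ ∈ 𝒳', bform M o𝒳' γ = 1) :
    ρ w₀ o𝒳 = o𝒳' := by
  classical
  -- basic facts about roots
  have hnorm : ∀ β ∈ rootSystem ρ, bform M β β = 1 := by
    rintro β ⟨⟨w, s⟩, rfl⟩
    rw [hρform, bform_simple, formEntry_diag]
  have hnz : ∀ β ∈ rootSystem ρ, β ≠ 0 := by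
    intro β hβ h0
    have := hnorm β hβ
    rw [h0] at this
    simp at this
  have hrefl : ∀ β ∈ rootSystem ρ, ∀ v, ρ (r β) v = v - (2 * bform M β v) • β := by
    rintro β ⟨⟨w, s⟩, rfl⟩ v
    rw [hr]
    have hmul : ρ (w * cs.simple s * w⁻¹) v = ρ w (ρ (cs.simple s) (ρ w⁻¹ v)) := by
      rw [map_mul, map_mul]; rfl
    have hwv : ρ w (ρ w⁻¹ v) = v := by
      have : ρ w * ρ w⁻¹ = 1 := by rw [← map_mul, mul_inv_cancel, map_one]
      calc ρ w (ρ w⁻¹ v) = (ρ w * ρ w⁻¹) v := rfl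
        _ = v := by rw [this]; rfl
    have hform : bform M (simpleRoot s) (ρ w⁻¹ v)
        = bform M (ρ w (simpleRoot s)) v := by
      conv_rhs => rw [← hwv]
      rw [hρform]
    rw [hmul, hρ, map_sub, map_smul, hwv, hform]
  -- pairwise nonpositivity within an AP set
  have hle0 : ∀ (Y : Set (S →₀ ℝ)), IsAP ρ Y → ∀ β ∈ Y, ∀ γ ∈ Y, β ≠ γ →
      bform M β γ ≤ 0 := by
    intro Y hA β hβ γ hγ hne
    obtain ⟨w, s, t, hs, ht⟩ := hA.2 β hβ γ hγ
    have hst : s ≠ t := by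
      rintro rfl
      exact hne (hs.symm.trans ht)
    rw [← hs, ← ht, hρform, bform_simple]
    exact formEntry_nonpos M hst
  -- a reflection determines its root up to sign
  have hpm : ∀ β ∈ rootSystem ρ, ∀ γ ∈ rootSystem ρ, r β = r γ → β = γ ∨ β = -γ := by
    intro β hβ γ hγ hrr
    have h2 : ρ (r β) β = ρ (r γ) β := by rw [hrr]
    rw [hrefl β hβ, hrefl γ hγ, hnorm β hβ] at h2
    have hsm : (2 : ℝ) • β = (2 * bform M γ β) • γ := by
      have := sub_right_injective h2
      rw [mul_one] at this
      exact this
    set c := bform M γ β with hc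
    have hbc : β = c • γ := by
      have : (2 : ℝ) • β = (2 : ℝ) • (c • γ) := by
        rw [hsm, smul_smul]
      exact smul_right_injective _ (by norm_num : (2:ℝ) ≠ 0) this
    have hc2 : c * c = 1 := by
      have h3 : bform M β β = c * c * bform M γ γ := by
        rw [hbc]
        simp only [map_smul, LinearMap.smul_apply, smul_eq_mul]
        ring
      rw [hnorm β hβ, hnorm γ hγ, mul_one] at h3
      linarith
    rcases mul_self_eq_one_iff.mp hc2 with h | h
    · left; rw [hbc, h, one_smul]
    · right; rw [hbc, h]; simp
  -- 𝒯 := 𝒳 \ 𝒳' maps to -𝒳' etc.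
  have hTneg : ∀ β ∈ 𝒳 \ 𝒳', -β ∈ 𝒳' := by
    intro β hβ
    have hmem : r β ∈ r '' 𝒳' := hR ▸ ⟨β, hβ.1, rfl⟩
    obtain ⟨γ, hγ, hrγ⟩ := hmem
    rcases hpm β (h𝒳Φ hβ.1) γ (h𝒳'Φ hγ) hrγ.symm with h | h
    · exact absurd (h ▸ hγ) hβ.2
    · rw [h, neg_neg]; exact hγ
  have hT'neg : ∀ γ ∈ 𝒳' \ 𝒳, -γ ∈ 𝒳 := by
    intro γ hγ
    have hmem : r γ ∈ r '' 𝒳 := hR.symm ▸ ⟨γ, hγ.1, rfl⟩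
    obtain ⟨β, hβ, hrβ⟩ := hmem
    rcases hpm γ (h𝒳'Φ hγ.1) β (h𝒳Φ hβ) hrβ.symm with h | h
    · exact absurd (h ▸ hβ) hγ.2
    · rw [h, neg_neg]; exact hβ
  have hspan : Submodule.span ℝ 𝒳 ≤ Submodule.span ℝ 𝒳' := by
    rw [Submodule.span_le]
    intro β hβ
    by_cases h : β ∈ 𝒳'
    · exact Submodule.subset_span h
    · have h1 : -β ∈ 𝒳' := hTneg β ⟨hβ, h⟩
      have h2 := Submodule.subset_span (R := ℝ) h1
      simpa using neg_mem h2
  -- orthogonality of 𝒯 and 𝒱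
  have horth : ∀ τ ∈ 𝒳 \ 𝒳', ∀ γ ∈ 𝒳 ∩ 𝒳', bform M τ γ = 0 := by
    intro τ hτ γ hγ
    have h1 : bform M τ γ ≤ 0 :=
      hle0 𝒳 hAP τ hτ.1 γ hγ.1 (by rintro rfl; exact hτ.2 hγ.2)
    have hτ' := hTneg τ hτ
    have hne2 : -τ ≠ γ := by
      intro h
      have hγX : -γ ∈ 𝒳 := by
        have : -γ = τ := by rw [← h, neg_neg]
        rw [this]; exact hτ.1
      exact no_pair_neg hAP.1 hγ.1 hγX (hnz γ (h𝒳Φ hγ.1))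
    have h2 : bform M (-τ) γ ≤ 0 := hle0 𝒳' hAP' (-τ) hτ' γ hγ.2 hne2
    rw [map_neg, LinearMap.neg_apply] at h2
    linarith
  -- w₀ moves vectors by elements of span 𝒯
  have hmove : ∀ v, ρ w₀ v - v ∈ Submodule.span ℝ (𝒳 \ 𝒳') := by
    refine Subgroup.closure_induction
      (p := fun g _ => ∀ v, ρ g v - v ∈ Submodule.span ℝ (𝒳 \ 𝒳')) ?_ ?_ ?_ ?_ hw₀mem
    · rintro x ⟨τ, hτ, rfl⟩ v
      rw [hrefl τ (h𝒳Φ hτ.1) v]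
      have : v - (2 * bform M τ v) • τ - v = -((2 * bform M τ v) • τ) := by abel
      rw [this]
      exact neg_mem (Submodule.smul_mem _ _ (Submodule.subset_span hτ))
    · intro v; simp
    · intro a b _ _ ha hb v
      have : ρ (a * b) v - v = (ρ a (ρ b v) - ρ b v) + (ρ b v - v) := by
        have hab : ρ (a * b) v = ρ a (ρ b v) := by rw [map_mul]; rfl
        rw [hab]; abel
      rw [this]
      exact add_mem (ha _) (hb _)
    · intro a _ ha v
      have hav : ρ a (ρ a⁻¹ v) = v := by
        have : ρ a * ρ a⁻¹ = 1 := by rw [← map_mul, mul_inv_cancel, map_one]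
        calc ρ a (ρ a⁻¹ v) = (ρ a * ρ a⁻¹) v := rfl
          _ = v := by rw [this]; rfl
      have : ρ a⁻¹ v - v = -(ρ a (ρ a⁻¹ v) - ρ a⁻¹ v) := by rw [hav]; abel
      rw [this]
      exact neg_mem (ha _)
  -- w₀ fixes 𝒱 pointwise
  have hfix : ∀ γ ∈ 𝒳 ∩ 𝒳', ρ w₀ γ = γ := by
    have : ∀ g ∈ Subgroup.closure (r '' (𝒳 \ 𝒳')), ∀ γ ∈ 𝒳 ∩ 𝒳', ρ g γ = γ := by
      intro g hg
      refine Subgroup.closure_induction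
        (p := fun g _ => ∀ γ ∈ 𝒳 ∩ 𝒳', ρ g γ = γ) ?_ ?_ ?_ ?_ hg
      · rintro x ⟨τ, hτ, rfl⟩ γ hγ
        rw [hrefl τ (h𝒳Φ hτ.1) γ, horth τ hτ γ hγ]
        simp
      · intro γ _; simp
      · intro a b _ _ ha hb γ hγ
        have : ρ (a * b) γ = ρ a (ρ b γ) := by rw [map_mul]; rfl
        rw [this, hb γ hγ, ha γ hγ]
      · intro a _ ha γ hγ
        have h1 : ρ a (ρ a⁻¹ γ) = γ := by
          have : ρ a * ρ a⁻¹ = 1 := by rw [← map_mul, mul_inv_cancel, map_one]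
          calc ρ a (ρ a⁻¹ γ) = (ρ a * ρ a⁻¹) γ := rfl
            _ = γ := by rw [this]; rfl
        have h2 : ρ a (ρ a⁻¹ γ) = ρ a γ := by rw [h1, ha γ hγ]
        exact (ρ a).injective h2
    exact this w₀ hw₀mem
  -- pairing of ρ w₀ o𝒳 with 𝒳'
  have hpair : ∀ γ ∈ 𝒳', bform M (ρ w₀ o𝒳) γ = 1 := by
    intro γ hγ
    by_cases h : γ ∈ 𝒳
    · have hfγ := hfix γ ⟨h, hγ⟩
      calc bform M (ρ w₀ o𝒳) γ = bform M (ρ w₀ o𝒳) (ρ w₀ γ) := by rw [hfγ]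
        _ = bform M o𝒳 γ := hρform _ _ _
        _ = 1 := ho𝒳 γ h
    · have hmγ : -γ ∈ 𝒳 := hT'neg γ ⟨hγ, h⟩
      have hmγ' : -γ ∉ 𝒳' := fun hc => no_pair_neg hAP'.1 hγ hc (hnz γ (h𝒳'Φ hγ))
      have himg : γ ∈ (fun v : S →₀ ℝ => -v) '' (𝒳 \ 𝒳') :=
        ⟨-γ, ⟨hmγ, hmγ'⟩, neg_neg γ⟩
      rw [← hw₀T] at himg
      obtain ⟨τ, hτ, hρτ⟩ := himg
      calc bform M (ρ w₀ o𝒳) γ = bform M (ρ w₀ o𝒳) (ρ w₀ τ) := by rw [hρτ]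
        _ = bform M o𝒳 τ := hρform _ _ _
        _ = 1 := ho𝒳 τ hτ.1
  -- the difference d
  set d := ρ w₀ o𝒳 - o𝒳' with hd
  have hdspan : d ∈ Submodule.span ℝ 𝒳' := by
    have h1 : ρ w₀ o𝒳 - o𝒳 ∈ Submodule.span ℝ 𝒳' :=
      hspan (Submodule.span_mono Set.diff_subset (hmove o𝒳))
    have h2 : o𝒳 ∈ Submodule.span ℝ 𝒳' := hspan ho𝒳span
    have heq : d = (ρ w₀ o𝒳 - o𝒳) + o𝒳 - o𝒳' := by rw [hd]; abel
    rw [heq]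
    exact sub_mem (add_mem h1 h2) ho𝒳'span
  have hdorth : ∀ γ ∈ 𝒳', bform M γ d = 0 := by
    intro γ hγ
    rw [bform_comm, hd, map_sub, LinearMap.sub_apply, hpair γ hγ, ho𝒳' γ hγ]
    ring
  -- averaged positive definite form
  set G := hsph'.toFinset with hG
  have hGmem : ∀ z : W, z ∈ G ↔ z ∈ Subgroup.closure (r '' 𝒳') := by
    intro z; rw [hG]; exact hsph'.mem_toFinset
  set B : (S →₀ ℝ) →ₗ[ℝ] (S →₀ ℝ) →ₗ[ℝ] ℝ :=
    ∑ z ∈ G, LinearMap.compl₁₂ Eform (ρ z : (S →₀ ℝ) →ₗ[ℝ] (S →₀ ℝ))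
      (ρ z : (S →₀ ℝ) →ₗ[ℝ] (S →₀ ℝ)) with hB
  have hBapp : ∀ x y, B x y = ∑ z ∈ G, Eform (ρ z x) (ρ z y) := by
    intro x y
    simp [hB, LinearMap.sum_apply, LinearMap.compl₁₂_apply]
  have hinv : ∀ g ∈ Subgroup.closure (r '' 𝒳'), ∀ x y, B (ρ g x) (ρ g y) = B x y := by
    intro g hg x y
    rw [hBapp, hBapp]
    refine Finset.sum_nbij' (fun z => z * g) (fun z => z * g⁻¹) ?_ ?_ ?_ ?_ ?_
    · intro z hz
      exact (hGmem _).mpr (mul_mem ((hGmem z).mp hz) hg)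
    · intro z hz
      exact (hGmem _).mpr (mul_mem ((hGmem z).mp hz) (inv_mem hg))
    · intro z _; group
    · intro z _; group
    · intro z _
      have h1 : ρ (z * g) x = ρ z (ρ g x) := by rw [map_mul]; rfl
      have h2 : ρ (z * g) y = ρ z (ρ g y) := by rw [map_mul]; rfl
      rw [h1, h2]
  have hBzero : ∀ γ ∈ 𝒳', B γ d = 0 := by
    intro γ hγ
    have hγΦ := h𝒳'Φ hγ
    have hγg : r γ ∈ Subgroup.closure (r '' 𝒳') :=
      Subgroup.subset_closure ⟨γ, hγ, rfl⟩
    have hfixd : ρ (r γ) d = d := by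
      rw [hrefl γ hγΦ d, hdorth γ hγ]
      simp
    have hnegγ : ρ (r γ) γ = -γ := by
      rw [hrefl γ hγΦ γ, hnorm γ hγΦ]
      module
    have h5 := hinv (r γ) hγg γ d
    rw [hfixd, hnegγ, map_neg, LinearMap.neg_apply] at h5
    linarith
  have hBd : B d d = 0 := by
    have : ∀ x, x ∈ Submodule.span ℝ 𝒳' → B x d = 0 := by
      intro x hx
      refine Submodule.span_induction (p := fun x _ => B x d = 0) ?_ ?_ ?_ ?_ hx
      · exact hBzero
      · simp
      · intro a b _ _ ha hb
        rw [map_add, LinearMap.add_apply, ha, hb, add_zero]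
      · intro c a _ ha
        rw [map_smul, LinearMap.smul_apply, ha, smul_zero]
    exact this d hdspan
  have hEd : Eform d d = 0 := by
    have hsum : ∑ z ∈ G, Eform (ρ z d) (ρ z d) = 0 := by rw [← hBapp]; exact hBd
    have h1G : (1 : W) ∈ G := (hGmem 1).mpr (one_mem _)
    have := (Finset.sum_eq_zero_iff_of_nonneg
      (fun z _ => Eform_self_nonneg (ρ z d))).mp hsum 1 h1G
    simpa using this
  have hd0 : d = 0 := Eform_self_eq_zero hEd
  rw [hd] at hd0
  exact sub_eq_zero.mp hd0
end
end

section
/- Let u,v ∈ W and X,Y ⊆ S be such that u is (∅,X)-minimal, v is (∅,Y)-minimal, and uW_Xu⁻¹ = vW_Yv⁻¹, where W_X and W_Y are the standard parabolic subgroups generated by X and Y. Then u(Π_X) = v(Π_Y), i.e. {u(α_s) : s ∈ X} = {v(α_t) : t ∈ Y}, where Π_X = {α_s : s ∈ X} and Π_Y = {α_t : t ∈ Y}. -/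
/-!
Context: `(W, S)` is a Coxeter system for the Coxeter matrix `M` (Mathlib's convention:
the entry `0` encodes `∞`).  `V = ⊕_{s ∈ S} ℝ·α_s` is realized as `S →₀ ℝ` with
`α_s = simpleRoot s`, equipped with the canonical symmetric bilinear form `bform M`.
The canonical faithful form-preserving representation `ρ : W →* GL(V)` and the map
`β ↦ r_β` assigning to each root its reflection are given as data, characterized by
the usual formulas (`hρ`, `hρinj`, `hρform`, `hr` below).
-/

noncomputable section

open scoped Real Pointwise

variable {S W : Type*}

variable [Group W]

/-! ### Auxiliary development -/

section Statement11Aux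

open CoxeterSystem List

variable {M : CoxeterMatrix S}

lemma bform_single_single (s t : S) :
    bform M (simpleRoot s) (simpleRoot t) = formEntry M s t := by
  have h1 : (simpleRoot s : S →₀ ℝ) = Finsupp.basisSingleOne s := by
    simp [simpleRoot]
  have h2 : (simpleRoot t : S →₀ ℝ) = Finsupp.basisSingleOne t := by
    simp [simpleRoot]
  rw [bform, h1, h2, Module.Basis.constr_basis, Module.Basis.constr_basis]

lemma formEntry_self (s : S) : formEntry M s s = 1 := by
  simp [formEntry, M.diagonal s]

lemma bform_self (s : S) : bform M (simpleRoot s) (simpleRoot s) = 1 := by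
  rw [bform_single_single, formEntry_self]

def Cst (M : CoxeterMatrix S) (i j : S) : ℝ :=
  if M i j = 0 then 1 else Real.cos (Real.pi / (M i j : ℝ))

def Sseq (M : CoxeterMatrix S) (i j : S) (k : ℕ) : ℝ :=
  if M i j = 0 then (k : ℝ)
  else Real.sin ((k : ℝ) * (Real.pi / (M i j : ℝ))) / Real.sin (Real.pi / (M i j : ℝ))

variable {i j : S}

lemma two_le_M (hij : i ≠ j) (h0 : M i j ≠ 0) : 2 ≤ M i j := by
  have h1 := M.off_diagonal i j hij
  omega

lemma sin_theta_pos (hij : i ≠ j) (h0 : M i j ≠ 0) :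
    0 < Real.sin (Real.pi / (M i j : ℝ)) := by
  have h2 : (2 : ℝ) ≤ (M i j : ℝ) := by exact_mod_cast two_le_M hij h0
  apply Real.sin_pos_of_pos_of_lt_pi
  · positivity
  · have h1 : Real.pi / (M i j : ℝ) ≤ Real.pi / 2 := by gcongr <;> norm_num
    have h3 : Real.pi / 2 < Real.pi := by linarith [Real.pi_pos]
    linarith

lemma Sseq_zero : Sseq M i j 0 = 0 := by simp [Sseq]

lemma Sseq_one (hij : i ≠ j) : Sseq M i j 1 = 1 := by
  rcases eq_or_ne (M i j) 0 with h | h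
  · simp [Sseq, h]
  · rw [Sseq, if_neg h]
    rw [Nat.cast_one, one_mul, div_self (sin_theta_pos hij h).ne']

lemma Sseq_rec (k : ℕ) :
    Sseq M i j (k + 2) = 2 * Cst M i j * Sseq M i j (k + 1) - Sseq M i j k := by
  rcases eq_or_ne (M i j) 0 with h | h
  · simp only [Sseq, Cst, if_pos h]
    push_cast; ring
  · simp only [Sseq, Cst, if_neg h]
    set θ := Real.pi / (M i j : ℝ) with hθ
    push_cast
    have e1 : ((k : ℝ) + 2) * θ = (((k : ℝ) + 1) * θ) + θ := by ring
    have e2 : (k : ℝ) * θ = (((k : ℝ) + 1) * θ) - θ := by ring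
    rw [e1, e2, Real.sin_add, Real.sin_sub]
    ring

lemma Sseq_nonneg (hij : i ≠ j) (k : ℕ) (hk : M i j = 0 ∨ k ≤ M i j) :
    0 ≤ Sseq M i j k := by
  rcases eq_or_ne (M i j) 0 with h | h
  · simp [Sseq, h]
  · have hk' : k ≤ M i j := hk.resolve_left h
    rw [Sseq, if_neg h]
    apply div_nonneg _ (sin_theta_pos hij h).le
    apply Real.sin_nonneg_of_nonneg_of_le_pi
    · positivity
    · have hM : (0:ℝ) < (M i j : ℝ) := by
        have := two_le_M hij h; positivity
      rw [mul_div_assoc', div_le_iff₀ hM]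
      have : (k : ℝ) ≤ (M i j : ℝ) := by exact_mod_cast hk'
      nlinarith [Real.pi_pos]

lemma formEntry_eq_neg_Cst : formEntry M i j = -(Cst M i j) := by
  rcases eq_or_ne (M i j) 0 with h | h <;> simp [formEntry, Cst, h]

variable (cs : CoxeterSystem M W)

open CoxeterSystem List

lemma Cst_symm : Cst M i j = Cst M j i := by
  simp [Cst, M.symmetric i j]

/-- A word with an adjacent repetition can be shortened. -/
lemma exists_shorter_of_not_chain :
    ∀ l : List S, ¬ l.Chain' (· ≠ ·) →
      ∃ l' : List S, (∀ x ∈ l', x ∈ l) ∧ cs.wordProd l' = cs.wordProd l ∧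
        l'.length + 2 = l.length := by
  intro l
  induction l with
  | nil => intro h; exact absurd List.isChain_nil h
  | cons a rest ih =>
    intro h
    match rest, h with
    | [], h => exact absurd (List.isChain_singleton a) h
    | b :: t, h =>
      unfold List.Chain' at h
      rw [List.isChain_cons_cons] at h
      push_neg at h
      by_cases hab : a = b
      · subst hab
        refine ⟨t, fun x hx => by simp [hx], ?_, by simp⟩
        rw [cs.wordProd_cons, cs.wordProd_cons, cs.simple_mul_simple_cancel_left]
      · obtain ⟨l', hmem, hprod, hlen⟩ := ih (h hab)
        refine ⟨a :: l', ?_, ?_, by simpa using hlen⟩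
        · intro x hx
          rcases List.mem_cons.mp hx with h1 | h1
          · simp [h1]
          · simp [hmem x h1]
        · rw [cs.wordProd_cons, cs.wordProd_cons, hprod]

lemma mem_alternatingWord' {k : ℕ} {x : S} :
    ∀ (i j : S), x ∈ CoxeterSystem.alternatingWord i j k → x = i ∨ x = j := by
  induction k with
  | zero => intro i j h; simp [CoxeterSystem.alternatingWord] at h
  | succ k ih =>
    intro i j h
    rw [CoxeterSystem.alternatingWord_succ'] at h
    rcases List.mem_cons.mp h with h1 | h1
    · split at h1 <;> simp [h1]
    · exact ih i j h1

lemma alternatingWord_drop {k q : ℕ} (hq : q ≤ k) (i j : S) :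
    (CoxeterSystem.alternatingWord i j k).drop q = CoxeterSystem.alternatingWord i j (k - q) := by
  induction k generalizing q with
  | zero => interval_cases q; simp
  | succ k ih =>
    cases q with
    | zero => simp
    | succ q =>
      rw [CoxeterSystem.alternatingWord_succ']
      rw [List.drop_succ_cons, ih (by omega)]
      congr 1
      omega

/-- Classification: a word over two letters with no adjacent repetition is alternating. -/
lemma eq_alternatingWord_of_chain (hij : i ≠ j) :
    ∀ l : List S, l.Chain' (· ≠ ·) → (∀ x ∈ l, x = i ∨ x = j) →
      l = CoxeterSystem.alternatingWord j i l.length ∨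
        l = CoxeterSystem.alternatingWord i j l.length := by
  intro l
  induction l using List.reverseRecOn with
  | nil => intro _ _; left; simp [CoxeterSystem.alternatingWord]
  | append_singleton l₀ x ih =>
    intro hch hmem
    have hch₀ : l₀.Chain' (· ≠ ·) := hch.prefix (List.prefix_append l₀ [x])
    have hlast : ∀ y ∈ l₀.getLast?, y ≠ x := by
      unfold List.Chain' at hch
      rw [List.isChain_append] at hch
      intro y hy
      exact hch.2.2 y hy x rfl
    obtain h₀ | h₀ := ih hch₀ (fun y hy => hmem y (by simp [hy]))
    all_goals have hx := hmem x (by simp)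
    all_goals rw [List.length_append, List.length_singleton]
    -- case l₀ = alt j i q
    · obtain hx | hx := hx
      · -- x = i : contradiction unless length = 0
        rcases Nat.eq_zero_or_eq_succ_pred l₀.length with hq | hq
        · left
          rw [hq] at h₀ ⊢
          simp only [CoxeterSystem.alternatingWord] at h₀
          rw [CoxeterSystem.alternatingWord_succ, List.concat_eq_append, h₀, hx]
          simp [CoxeterSystem.alternatingWord]
        · exfalso
          rw [hq, CoxeterSystem.alternatingWord_succ, List.concat_eq_append] at h₀
          have hg : l₀.getLast? = some i := by rw [h₀, List.getLast?_concat]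
          exact hlast i (by simp [hg]) hx.symm
      · right
        rw [hx, CoxeterSystem.alternatingWord_succ, List.concat_eq_append, ← h₀]
    -- case l₀ = alt i j q
    · obtain hx | hx := hx
      · left
        rw [hx, CoxeterSystem.alternatingWord_succ, List.concat_eq_append, ← h₀]
      · rcases Nat.eq_zero_or_eq_succ_pred l₀.length with hq | hq
        · right
          rw [hq] at h₀ ⊢
          simp only [CoxeterSystem.alternatingWord] at h₀
          rw [CoxeterSystem.alternatingWord_succ, List.concat_eq_append, h₀, hx]
          simp [CoxeterSystem.alternatingWord]
        · exfalso
          rw [hq, CoxeterSystem.alternatingWord_succ, List.concat_eq_append] at h₀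
          have hg : l₀.getLast? = some j := by rw [h₀, List.getLast?_concat]
          exact hlast j (by simp [hg]) hx.symm

variable (ρ : W →* ((S →₀ ℝ) ≃ₗ[ℝ] (S →₀ ℝ)))

lemma rho_mul_apply (a b : W) (x : S →₀ ℝ) : ρ (a * b) x = ρ a (ρ b x) := by
  rw [map_mul]; rfl

lemma rho_one_apply (x : S →₀ ℝ) : ρ 1 x = x := by
  rw [map_one]; rfl

section withrho

variable {cs : CoxeterSystem M W} {ρ}

lemma rho_simple_self (hρ : ∀ (s : S) (v : S →₀ ℝ),
      ρ (cs.simple s) v = v - (2 * bform M (simpleRoot s) v) • simpleRoot s) (i : S) : ρ (cs.simple i) (simpleRoot i) = -(simpleRoot i) := by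
  rw [hρ, bform_self]
  module

lemma rho_simple_other (hρ : ∀ (s : S) (v : S →₀ ℝ),
      ρ (cs.simple s) v = v - (2 * bform M (simpleRoot s) v) • simpleRoot s) (hij : i ≠ j) :
    ρ (cs.simple j) (simpleRoot i) = simpleRoot i + (2 * Cst M i j) • simpleRoot j := by
  rw [hρ, bform_single_single, formEntry_eq_neg_Cst, Cst_symm]
  module

lemma rho_alt (hρ : ∀ (s : S) (v : S →₀ ℝ),
      ρ (cs.simple s) v = v - (2 * bform M (simpleRoot s) v) • simpleRoot s) (hij : i ≠ j) : ∀ p : ℕ, (M i j = 0 ∨ p + 1 ≤ M i j) →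
    ρ (cs.wordProd (CoxeterSystem.alternatingWord i j p)) (simpleRoot i)
      = Sseq M i j (if Even p then p + 1 else p) • simpleRoot i
        + Sseq M i j (if Even p then p else p + 1) • simpleRoot j := by
  intro p
  induction p with
  | zero =>
    intro _
    simp only [CoxeterSystem.alternatingWord, cs.wordProd_nil, rho_one_apply, if_pos (Even.zero)]
    rw [Sseq_one hij, Sseq_zero]
    module
  | succ p IHp =>
    intro hp
    have hp' : M i j = 0 ∨ p + 1 ≤ M i j := by omega
    rw [CoxeterSystem.alternatingWord_succ', cs.wordProd_cons, rho_mul_apply, IHp hp']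
    rcases Nat.even_or_odd p with hev | hod
    · have h1 : ¬ Even (p + 1) := by simp [Nat.even_add_one, hev]
      rw [if_pos hev, if_pos hev, if_pos hev, if_neg h1, if_neg h1]
      rw [map_add, map_smul, map_smul, rho_simple_other hρ hij, rho_simple_self hρ j,
        show p + 1 + 1 = p + 2 from rfl, Sseq_rec (M := M) (i := i) (j := j) p]
      module
    · have hnev : ¬ Even p := Nat.not_even_iff_odd.mpr hod
      have h2 : Even (p + 1) := by simpa [Nat.even_add_one] using hnev
      rw [if_neg hnev, if_neg hnev, if_neg hnev, if_pos h2, if_pos h2]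
      rw [map_add, map_smul, map_smul, rho_simple_other hρ (Ne.symm hij),
        rho_simple_self hρ i, Cst_symm (M := M) (i := j),
        show p + 1 + 1 = p + 2 from rfl, Sseq_rec (M := M) (i := i) (j := j) p]
      module

end withrho

lemma exists_shorter_alt (hij : i ≠ j) (h0 : M i j ≠ 0) {k : ℕ} (hk : M i j < k) :
    ∃ l' : List S, (∀ x ∈ l', x = i ∨ x = j) ∧
      cs.wordProd l' = cs.wordProd (CoxeterSystem.alternatingWord i j k) ∧
      l'.length + 2 = k := by
  have hm2 : 2 ≤ M i j := two_le_M hij h0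
  set m := M i j with hm
  refine ⟨(CoxeterSystem.alternatingWord i j k).take (k - (m+1)) ++
    CoxeterSystem.alternatingWord j i (m - 1), ?_, ?_, ?_⟩
  · intro x hx
    rcases List.mem_append.mp hx with h | h
    · exact mem_alternatingWord' i j (List.mem_of_mem_take h)
    · exact (mem_alternatingWord' j i h).symm
  · have hdrop : (CoxeterSystem.alternatingWord i j k).drop (k - (m+1))
        = CoxeterSystem.alternatingWord i j (m+1) := by
      rw [alternatingWord_drop (by omega) i j]
      congr 1
      omega
    have hsub := cs.prod_alternatingWord_eq_prod_alternatingWord_sub i j (m+1)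
      (by omega)
    have hsub' : cs.wordProd (CoxeterSystem.alternatingWord i j (m+1))
        = cs.wordProd (CoxeterSystem.alternatingWord j i (m-1)) := by
      rw [hsub]
      congr 2
      omega
    conv_rhs => rw [← List.take_append_drop (k - (m+1)) (CoxeterSystem.alternatingWord i j k)]
    rw [cs.wordProd_append, cs.wordProd_append, hdrop, hsub']
  · rw [List.length_append, List.length_take, CoxeterSystem.length_alternatingWord,
      CoxeterSystem.length_alternatingWord]
    omega


variable {cs} {ρ}

theorem posA
    (hρ : ∀ (s : S) (v : S →₀ ℝ),
      ρ (cs.simple s) v = v - (2 * bform M (simpleRoot s) v) • simpleRoot s) :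
    ∀ (n : ℕ) (w : W) (i : S), cs.length w = n →
      cs.length w < cs.length (w * cs.simple i) → ∀ x : S, 0 ≤ ρ w (simpleRoot i) x := by
  intro n
  induction n using Nat.strong_induction_on with
  | _ n IH =>
  intro w i hw hlt x
  classical
  rcases Nat.eq_zero_or_pos n with hn | hn
  · subst hn
    have hw1 : w = 1 := cs.length_eq_zero_iff.mp hw
    subst hw1
    rw [rho_one_apply]
    simp only [simpleRoot, Finsupp.single_apply]
    split <;> norm_num
  · have hw1 : w ≠ 1 := by
      intro h; rw [h, cs.length_one] at hw; omega
    obtain ⟨j, hdesc⟩ := cs.exists_rightDescent_of_ne_one hw1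
    rw [CoxeterSystem.IsRightDescent] at hdesc
    have hij : i ≠ j := by rintro rfl; omega
    have hex : ∃ k, ∃ (a : W) (l : List S), cs.length a = k ∧ (∀ y ∈ l, y = i ∨ y = j) ∧
        w = a * cs.wordProd l ∧ k + l.length = n :=
      ⟨n, w, [], hw, by simp, by simp, by simp⟩
    set k₀ := Nat.find hex with hk₀def
    obtain ⟨a, l, ha, hmem, hfact, hsum⟩ := Nat.find_spec hex
    have hA : ∀ y, y = i ∨ y = j → cs.length a < cs.length (a * cs.simple y) := by
      intro y hy
      by_contra hcon
      push_neg at hcon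
      have hne := cs.length_mul_simple_ne a y
      have hlt2 : cs.length (a * cs.simple y) < cs.length a := lt_of_le_of_ne hcon hne
      have hlen : cs.length (a * cs.simple y) = k₀ - 1 ∧ 1 ≤ k₀ := by
        rcases cs.length_mul_simple a y with h | h <;> omega
      have hQ : ∃ (a' : W) (l' : List S), cs.length a' = k₀ - 1 ∧
          (∀ y' ∈ l', y' = i ∨ y' = j) ∧
          w = a' * cs.wordProd l' ∧ (k₀ - 1) + l'.length = n := by
        refine ⟨a * cs.simple y, y :: l, hlen.1, ?_, ?_,
          by simp only [List.length_cons]; omega⟩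
        · intro y' hy'
          rcases List.mem_cons.mp hy' with h | h
          · exact h ▸ hy
          · exact hmem y' h
        · rw [cs.wordProd_cons, mul_assoc, cs.simple_mul_simple_cancel_left]
          exact hfact
      exact Nat.find_min hex (show k₀ - 1 < k₀ by omega) hQ
    have hlne : l ≠ [] := by
      intro h
      subst h
      rw [cs.wordProd_nil, mul_one] at hfact
      have h2 := hA j (Or.inr rfl)
      rw [← hfact] at h2
      omega
    have hC : ∀ l₂ : List S, cs.wordProd l₂ = cs.wordProd l * cs.simple i →
        l.length + 1 ≤ l₂.length := by
      intro l₂ hp2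
      have h1 : w * cs.simple i = a * cs.wordProd l₂ := by
        rw [hp2, hfact, mul_assoc]
      have h2 : cs.length (w * cs.simple i) ≤ cs.length a + l₂.length := by
        rw [h1]
        have h3 := cs.length_mul_le a (cs.wordProd l₂)
        have h4 := cs.length_wordProd_le l₂
        omega
      omega
    have hC' : ∀ l₂ : List S, cs.wordProd l₂ = cs.wordProd l → l.length ≤ l₂.length := by
      intro l₂ hp2
      have h1 : w = a * cs.wordProd l₂ := by rw [hp2]; exact hfact
      have h2 : cs.length w ≤ cs.length a + l₂.length := by
        rw [h1]
        have h3 := cs.length_mul_le a (cs.wordProd l₂)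
        have h4 := cs.length_wordProd_le l₂
        omega
      omega
    have hchain : l.Chain' (· ≠ ·) := by
      by_contra hcon
      obtain ⟨l₃, hm3, hp3, hl3⟩ := exists_shorter_of_not_chain cs l hcon
      have := hC' l₃ hp3
      omega
    have hchain2 : (l ++ [i]).Chain' (· ≠ ·) := by
      by_contra hcon
      obtain ⟨l₃, hm3, hp3, hl3⟩ := exists_shorter_of_not_chain cs _ hcon
      rw [cs.wordProd_append, cs.wordProd_singleton] at hp3
      have h5 := hC l₃ hp3
      rw [List.length_append, List.length_singleton] at hl3
      omega
    have hmem2 : ∀ y ∈ l ++ [i], y = i ∨ y = j := by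
      intro y hy
      rcases List.mem_append.mp hy with h | h
      · exact hmem y h
      · left; simpa using h
    obtain halt | halt := eq_alternatingWord_of_chain hij (l ++ [i]) hchain2 hmem2
    swap
    · exfalso
      rw [List.length_append, List.length_singleton,
        CoxeterSystem.alternatingWord_succ] at halt
      have e1 : (l ++ [i]).getLast? = some i := List.getLast?_concat
      have e2 : (l ++ [i]).getLast? = some j := by
        rw [halt, List.concat_eq_append, List.getLast?_concat]
      exact hij (Option.some_injective _ (e1.symm.trans e2))
    rw [List.length_append, List.length_singleton,
      CoxeterSystem.alternatingWord_succ, List.concat_eq_append] at halt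
    have hd : l = CoxeterSystem.alternatingWord i j l.length :=
      List.append_cancel_right halt
    have hL : M i j = 0 ∨ l.length + 1 ≤ M i j := by
      by_contra hcon
      push_neg at hcon
      obtain ⟨h0, hlen'⟩ := hcon
      have h0' : M j i ≠ 0 := by rw [M.symmetric j i]; exact h0
      have hlt' : M j i < l.length + 1 := by rw [M.symmetric j i]; omega
      obtain ⟨l', hm', hp', hl'⟩ := exists_shorter_alt cs hij.symm h0' hlt'
      have hp'' : cs.wordProd l' = cs.wordProd l * cs.simple i := by
        rw [hp']
        have : CoxeterSystem.alternatingWord j i (l.length + 1)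
            = CoxeterSystem.alternatingWord i j l.length ++ [i] := by
          rw [CoxeterSystem.alternatingWord_succ, List.concat_eq_append]
        rw [this, ← hd, cs.wordProd_append, cs.wordProd_singleton]
      have := hC l' hp''
      omega
    have hlen1 : 1 ≤ l.length := List.length_pos_iff.mpr hlne
    have hk₀lt : k₀ < n := by omega
    have hposi := IH k₀ hk₀lt a i ha (hA i (Or.inl rfl))
    have hposj := IH k₀ hk₀lt a j ha (hA j (Or.inr rfl))
    have hstep : ρ w (simpleRoot i)
        = Sseq M i j (if Even l.length then l.length + 1 else l.length) • ρ a (simpleRoot i)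
          + Sseq M i j (if Even l.length then l.length else l.length + 1) • ρ a (simpleRoot j) := by
      conv_lhs => rw [hfact, rho_mul_apply, hd]
      rw [rho_alt hρ hij l.length hL, map_add, map_smul, map_smul]
    rw [hstep, Finsupp.add_apply, Finsupp.smul_apply, Finsupp.smul_apply,
      smul_eq_mul, smul_eq_mul]
    have hb1 : M i j = 0 ∨ (if Even l.length then l.length + 1 else l.length) ≤ M i j := by
      rcases hL with h | h
      · exact Or.inl h
      · right; split <;> omega
    have hb2 : M i j = 0 ∨ (if Even l.length then l.length else l.length + 1) ≤ M i j := by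
      rcases hL with h | h
      · exact Or.inl h
      · right; split <;> omega
    have hs1 := Sseq_nonneg hij _ hb1
    have hs2 := Sseq_nonneg hij _ hb2
    exact add_nonneg (mul_nonneg hs1 (hposi x)) (mul_nonneg hs2 (hposj x))


lemma negA (hρ : ∀ (s : S) (v : S →₀ ℝ),
      ρ (cs.simple s) v = v - (2 * bform M (simpleRoot s) v) • simpleRoot s)
    (w : W) (i : S) (h : cs.length (w * cs.simple i) < cs.length w) :
    ∀ x, ρ w (simpleRoot i) x ≤ 0 := by
  intro x
  have h2 : cs.length (w * cs.simple i) < cs.length (w * cs.simple i * cs.simple i) := by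
    rwa [cs.simple_mul_simple_cancel_right]
  have h3 := posA hρ (cs.length (w * cs.simple i)) (w * cs.simple i) i rfl h2 x
  have h4 : ρ w (simpleRoot i) = - (ρ (w * cs.simple i) (simpleRoot i)) := by
    conv_lhs => rw [show w = w * cs.simple i * cs.simple i from
      (cs.simple_mul_simple_cancel_right i).symm]
    rw [rho_mul_apply, rho_simple_self hρ i, map_neg]
  rw [h4, Finsupp.neg_apply]
  linarith

lemma rho_dichotomy (hρ : ∀ (s : S) (v : S →₀ ℝ),
      ρ (cs.simple s) v = v - (2 * bform M (simpleRoot s) v) • simpleRoot s)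
    (w : W) (i : S) :
    (∀ x, 0 ≤ ρ w (simpleRoot i) x) ∨ (∀ x, ρ w (simpleRoot i) x ≤ 0) := by
  rcases lt_or_gt_of_ne (cs.length_mul_simple_ne w i) with h | h
  · right; exact negA hρ w i h
  · left; exact posA hρ (cs.length w) w i rfl h

variable (ρ) in
def IsRt (β : S →₀ ℝ) : Prop := ∃ (w : W) (i : S), ρ w (simpleRoot i) = β

lemma simpleRoot_ne_zero (i : S) : (simpleRoot i : S →₀ ℝ) ≠ 0 := by
  simp [simpleRoot, Finsupp.single_eq_zero]

lemma isRt_ne_zero {β : S →₀ ℝ} (h : IsRt ρ β) : β ≠ 0 := by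
  obtain ⟨w, i, rfl⟩ := h
  intro h0
  have h1 : (simpleRoot i : S →₀ ℝ) = 0 := by
    apply (ρ w).injective
    rw [h0, map_zero]
  exact simpleRoot_ne_zero i h1

lemma isRt_norm (hρform : ∀ (w : W) (x y : S →₀ ℝ), bform M (ρ w x) (ρ w y) = bform M x y)
    {β : S →₀ ℝ} (h : IsRt ρ β) : bform M β β = 1 := by
  obtain ⟨w, i, rfl⟩ := h
  rw [hρform, bform_self]

lemma isRt_dichotomy (hρ : ∀ (s : S) (v : S →₀ ℝ),
      ρ (cs.simple s) v = v - (2 * bform M (simpleRoot s) v) • simpleRoot s)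
    {β : S →₀ ℝ} (h : IsRt ρ β) : (∀ x, 0 ≤ β x) ∨ (∀ x, β x ≤ 0) := by
  obtain ⟨w, i, rfl⟩ := h
  exact rho_dichotomy hρ w i

lemma bform_smul_smul (c : ℝ) (f g : S →₀ ℝ) :
    bform M (c • f) (c • g) = c * c * bform M f g := by
  rw [map_smul, LinearMap.map_smul₂, smul_eq_mul, smul_eq_mul]
  ring

lemma mem_closure_simple_iff (cs : CoxeterSystem M W) (X : Set S) (g : W) :
    g ∈ Subgroup.closure (cs.simple '' X) ↔
      ∃ l : List S, (∀ x ∈ l, x ∈ X) ∧ g = cs.wordProd l := by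
  constructor
  · intro hg
    induction hg using Subgroup.closure_induction with
    | mem y hy =>
      obtain ⟨x, hx, rfl⟩ := hy
      exact ⟨[x], by simpa using hx, by simp⟩
    | one => exact ⟨[], by simp, by simp⟩
    | mul g₁ g₂ hg₁ hg₂ ih₁ ih₂ =>
      obtain ⟨l₁, hm₁, rfl⟩ := ih₁
      obtain ⟨l₂, hm₂, rfl⟩ := ih₂
      refine ⟨l₁ ++ l₂, ?_, (cs.wordProd_append l₁ l₂).symm⟩
      intro x hx
      rcases List.mem_append.mp hx with h | h
      exacts [hm₁ x h, hm₂ x h]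
    | inv g hg ih =>
      obtain ⟨l, hm, rfl⟩ := ih
      exact ⟨l.reverse, fun x hx => hm x (List.mem_reverse.mp hx),
        (cs.wordProd_reverse l).symm⟩
  · rintro ⟨l, hm, rfl⟩
    induction l with
    | nil =>
      rw [cs.wordProd_nil]
      exact one_mem _
    | cons x t ih =>
      rw [cs.wordProd_cons]
      apply mul_mem
      · exact Subgroup.subset_closure ⟨x, hm x (by simp), rfl⟩
      · exact ih (fun y hy => hm y (by simp [hy]))

lemma rho_word_apply_outside (hρ : ∀ (s : S) (v : S →₀ ℝ),
      ρ (cs.simple s) v = v - (2 * bform M (simpleRoot s) v) • simpleRoot s)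
    (X : Set S) :
    ∀ (l : List S), (∀ x ∈ l, x ∈ X) → ∀ (f : S →₀ ℝ) (t : S), t ∉ X →
      ρ (cs.wordProd l) f t = f t := by
  intro l
  induction l with
  | nil => intro _ f t _; rw [cs.wordProd_nil, rho_one_apply]
  | cons x l ih =>
    intro hm f t ht
    classical
    rw [cs.wordProd_cons, rho_mul_apply, hρ]
    rw [Finsupp.sub_apply, Finsupp.smul_apply, smul_eq_mul]
    have hx : (simpleRoot x : S →₀ ℝ) t = 0 := by
      rw [simpleRoot, Finsupp.single_apply, if_neg]
      intro h
      exact ht (h ▸ hm x (by simp))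
    rw [hx, mul_zero, sub_zero, ih (fun y hy => hm y (by simp [hy])) f t ht]

variable (cs ρ) in
def PhiPos (X : Set S) : Set (S →₀ ℝ) :=
  {β | (∀ x, 0 ≤ β x) ∧ β ≠ 0 ∧
    ∃ w ∈ Subgroup.closure (cs.simple '' X), ∃ i ∈ X, ρ w (simpleRoot i) = β}

lemma simple_mem_PhiPos {X : Set S} {i : S} (hiX : i ∈ X) :
    simpleRoot i ∈ PhiPos cs ρ X := by
  classical
  refine ⟨?_, simpleRoot_ne_zero i, 1, one_mem _, i, hiX, rho_one_apply ρ _⟩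
  intro x
  rw [simpleRoot, Finsupp.single_apply]
  split <;> norm_num

lemma phipos_support (hρ : ∀ (s : S) (v : S →₀ ℝ),
      ρ (cs.simple s) v = v - (2 * bform M (simpleRoot s) v) • simpleRoot s)
    {X : Set S} {β : S →₀ ℝ} (hβ : β ∈ PhiPos cs ρ X) : ∀ t, t ∉ X → β t = 0 := by
  obtain ⟨hpos, hne, w, hw, i, hiX, heq⟩ := hβ
  intro t htX
  classical
  obtain ⟨l, hlm, rfl⟩ := (mem_closure_simple_iff cs X w).mp hw
  rw [← heq, rho_word_apply_outside hρ X l hlm (simpleRoot i) t htX,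
    simpleRoot, Finsupp.single_apply, if_neg]
  intro h
  exact htX (h ▸ hiX)

lemma pos_image (hρ : ∀ (s : S) (v : S →₀ ℝ),
      ρ (cs.simple s) v = v - (2 * bform M (simpleRoot s) v) • simpleRoot s)
    (u : W) (X : Set S)
    (humin : ∀ g ∈ Subgroup.closure (cs.simple '' X), cs.length u ≤ cs.length (u * g)) :
    ∀ β ∈ PhiPos cs ρ X, (∀ x, 0 ≤ ρ u β x) ∧ ρ u β ≠ 0 := by
  intro β hβ
  obtain ⟨hpos, hne, w, hw, i, hiX, heq⟩ := hβ
  constructor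
  swap
  · intro h0
    apply hne
    apply (ρ u).injective
    rw [h0, map_zero]
  intro x
  have hsimple : ∀ s ∈ X, ∀ y, 0 ≤ ρ u (simpleRoot s) y := by
    intro s hs y
    have h1 : cs.simple s ∈ Subgroup.closure (cs.simple '' X) :=
      Subgroup.subset_closure ⟨s, hs, rfl⟩
    have h2 := humin (cs.simple s) h1
    have h3 := cs.length_mul_simple_ne u s
    exact posA hρ (cs.length u) u s rfl (lt_of_le_of_ne h2 (Ne.symm h3)) y
  have hsupp : ∀ t ∈ β.support, t ∈ X := by
    intro t ht
    by_contra htX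
    exact (Finsupp.mem_support_iff.mp ht)
      (phipos_support hρ ⟨hpos, hne, w, hw, i, hiX, heq⟩ t htX)
  have hrep : ρ u β = β.sum (fun t c => c • ρ u (simpleRoot t)) := by
    conv_lhs => rw [← Finsupp.sum_single β]
    rw [map_finsuppSum]
    apply Finsupp.sum_congr
    intro t _
    rw [← map_smul]
    congr 1
    simp [simpleRoot, Finsupp.smul_single']
  rw [hrep, Finsupp.sum_apply, Finsupp.sum]
  apply Finset.sum_nonneg
  intro t ht
  rw [Finsupp.smul_apply, smul_eq_mul]
  exact mul_nonneg (hpos t) (hsimple t (hsupp t ht) x)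


lemma turning (hρ : ∀ (s : S) (v : S →₀ ℝ),
      ρ (cs.simple s) v = v - (2 * bform M (simpleRoot s) v) • simpleRoot s)
    (hρform : ∀ (w : W) (x y : S →₀ ℝ), bform M (ρ w x) (ρ w y) = bform M x y)
    (Y : Set S) :
    ∀ (l : List S), (∀ x ∈ l, x ∈ Y) → ∀ δ : S →₀ ℝ, IsRt ρ δ → (∀ x, 0 ≤ δ x) →
      (∀ x, ρ (cs.wordProd l) δ x ≤ 0) → δ ∈ PhiPos cs ρ Y := by
  intro l
  induction l with
  | nil =>
    intro _ δ hrt hpos hneg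
    exfalso
    apply isRt_ne_zero hrt
    ext x
    have h1 := hneg x
    rw [cs.wordProd_nil, rho_one_apply] at h1
    have h2 := hpos x
    rw [Finsupp.coe_zero, Pi.zero_apply]
    linarith
  | cons y l ih =>
    intro hm δ hrt hpos hneg
    classical
    have hγrt : IsRt ρ (ρ (cs.wordProd l) δ) := by
      obtain ⟨b, r, rfl⟩ := hrt
      exact ⟨cs.wordProd l * b, r, by rw [rho_mul_apply]⟩
    rcases isRt_dichotomy hρ hγrt with hg | hg
    swap
    · exact ih (fun x hx => hm x (by simp [hx])) δ hrt hpos hg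
    set γ := ρ (cs.wordProd l) δ with hγ
    have hsy : ∀ x, ρ (cs.simple y) γ x ≤ 0 := by
      intro x
      have h1 := hneg x
      rwa [cs.wordProd_cons, rho_mul_apply] at h1
    have hγy : γ = Finsupp.single y (γ y) := by
      ext x
      rcases eq_or_ne y x with rfl | hxy
      · rw [Finsupp.single_eq_same]
      · rw [Finsupp.single_apply, if_neg hxy]
        have h1 := hsy x
        rw [hρ, Finsupp.sub_apply, Finsupp.smul_apply, smul_eq_mul, simpleRoot,
          Finsupp.single_apply, if_neg hxy, mul_zero, sub_zero] at h1
        exact le_antisymm h1 (hg x)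
    have hnorm : bform M γ γ = 1 := isRt_norm hρform hγrt
    rw [hγy] at hnorm
    rw [show (Finsupp.single y (γ y) : S →₀ ℝ) = (γ y) • simpleRoot y from by
      simp [simpleRoot, Finsupp.smul_single'], bform_smul_smul, bform_self, mul_one] at hnorm
    have hγy1 : γ = simpleRoot y := by
      rw [hγy]
      have h2 : γ y = 1 := by nlinarith [hg y]
      rw [h2, simpleRoot]
    refine ⟨hpos, isRt_ne_zero hrt, (cs.wordProd l)⁻¹, ?_, y, hm y (by simp), ?_⟩
    · apply inv_mem
      exact (mem_closure_simple_iff cs Y (cs.wordProd l)).mpr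
        ⟨l, fun x hx => hm x (by simp [hx]), rfl⟩
    · rw [← hγy1, hγ, ← rho_mul_apply, inv_mul_cancel, rho_one_apply]

lemma phi_transfer
    (hρ : ∀ (s : S) (v : S →₀ ℝ),
      ρ (cs.simple s) v = v - (2 * bform M (simpleRoot s) v) • simpleRoot s)
    (hρform : ∀ (w : W) (x y : S →₀ ℝ), bform M (ρ w x) (ρ w y) = bform M x y)
    (u v : W) (X Y : Set S)
    (humin : ∀ g ∈ Subgroup.closure (cs.simple '' X), cs.length u ≤ cs.length (u * g))
    (hvmin : ∀ g ∈ Subgroup.closure (cs.simple '' Y), cs.length v ≤ cs.length (v * g))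
    (hconj : Subgroup.map (MulAut.conj u).toMonoidHom (Subgroup.closure (cs.simple '' X)) =
      Subgroup.map (MulAut.conj v).toMonoidHom (Subgroup.closure (cs.simple '' Y))) :
    ⇑(ρ u) '' (PhiPos cs ρ X) ⊆ ⇑(ρ v) '' (PhiPos cs ρ Y) := by
  rintro _ ⟨β, hβ, rfl⟩
  obtain ⟨hpos, hne, w, hw, i, hiX, heq⟩ := hβ
  have hg1 : w * cs.simple i * w⁻¹ ∈ Subgroup.closure (cs.simple '' X) :=
    mul_mem (mul_mem hw (Subgroup.subset_closure ⟨i, hiX, rfl⟩)) (inv_mem hw)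
  have hg2 : u * (w * cs.simple i * w⁻¹) * u⁻¹ ∈
      Subgroup.map (MulAut.conj v).toMonoidHom (Subgroup.closure (cs.simple '' Y)) := by
    rw [← hconj]
    exact ⟨_, hg1, by simp⟩
  obtain ⟨q, hqY, hqv⟩ := hg2
  have hqv' : v * q * v⁻¹ = u * (w * cs.simple i * w⁻¹) * u⁻¹ := by
    simpa using hqv
  set z := v⁻¹ * u * w with hz
  have hzs : q * z = z * cs.simple i := by
    have hq : q = v⁻¹ * (u * (w * cs.simple i * w⁻¹) * u⁻¹) * v := by
      rw [← hqv']; group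
    rw [hq, hz]; group
  have hδrt : IsRt ρ (ρ z (simpleRoot i)) := ⟨z, i, rfl⟩
  have hneg : ρ q (ρ z (simpleRoot i)) = - (ρ z (simpleRoot i)) := by
    rw [← rho_mul_apply, hzs, rho_mul_apply, rho_simple_self hρ i, map_neg]
  have huβ : ρ v (ρ z (simpleRoot i)) = ρ u β := by
    rw [← rho_mul_apply, show v * z = u * w from by rw [hz]; group, rho_mul_apply, heq]
  have huβpos := pos_image hρ u X humin β ⟨hpos, hne, w, hw, i, hiX, heq⟩
  obtain ⟨lq, hlq, hql⟩ := (mem_closure_simple_iff cs Y q).mp hqY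
  rcases isRt_dichotomy hρ hδrt with hd | hd
  · -- δ nonneg
    have hδY : ρ z (simpleRoot i) ∈ PhiPos cs ρ Y := by
      apply turning hρ hρform Y lq hlq _ hδrt hd
      intro x
      rw [← hql, hneg, Finsupp.neg_apply]
      linarith [hd x]
    exact ⟨ρ z (simpleRoot i), hδY, huβ⟩
  · -- δ nonpos : contradiction
    exfalso
    have hδ'rt : IsRt ρ (- (ρ z (simpleRoot i))) :=
      ⟨z * cs.simple i, i, by rw [rho_mul_apply, rho_simple_self hρ i, map_neg]⟩
    have hd' : ∀ x, 0 ≤ (- (ρ z (simpleRoot i))) x := by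
      intro x; rw [Finsupp.neg_apply]; linarith [hd x]
    have hδ'Y : - (ρ z (simpleRoot i)) ∈ PhiPos cs ρ Y := by
      apply turning hρ hρform Y lq hlq _ hδ'rt hd'
      intro x
      rw [← hql, map_neg, hneg, Finsupp.neg_apply, Finsupp.neg_apply]
      linarith [hd x]
    have hvpos := pos_image hρ v Y hvmin _ hδ'Y
    have hvneg : ρ v (- (ρ z (simpleRoot i))) = - (ρ u β) := by
      rw [map_neg, huβ]
    apply huβpos.2
    ext x
    have a1 := huβpos.1 x
    have a2 := hvpos.1 x
    rw [hvneg, Finsupp.neg_apply] at a2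
    rw [Finsupp.coe_zero, Pi.zero_apply]
    linarith

def Combo (A : Set (S →₀ ℝ)) (β : S →₀ ℝ) : Prop :=
  ∃ (t : Finset S) (g : S → (S →₀ ℝ)) (c : S → ℝ),
    (∀ x ∈ t, g x ∈ A ∧ g x ≠ β ∧ 0 ≤ c x) ∧ ∑ x ∈ t, c x • g x = β

def MinSet (A : Set (S →₀ ℝ)) : Set (S →₀ ℝ) := {β ∈ A | ¬ Combo A β}

lemma combo_map (e : (S →₀ ℝ) ≃ₗ[ℝ] (S →₀ ℝ)) (A : Set (S →₀ ℝ)) (β : S →₀ ℝ)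
    (h : Combo A β) : Combo (⇑e '' A) (e β) := by
  obtain ⟨t, g, c, h1, h2⟩ := h
  refine ⟨t, fun x => e (g x), c, ?_, ?_⟩
  · intro x hx
    obtain ⟨ha, hb, hc⟩ := h1 x hx
    exact ⟨⟨g x, ha, rfl⟩, fun hh => hb (e.injective hh), hc⟩
  · have h3 : ∑ x ∈ t, c x • e (g x) = e (∑ x ∈ t, c x • g x) := by
      rw [map_sum]
      exact Finset.sum_congr rfl (fun x _ => (map_smul e (c x) (g x)).symm)
    rw [h3, h2]

lemma combo_map_iff (e : (S →₀ ℝ) ≃ₗ[ℝ] (S →₀ ℝ)) (A : Set (S →₀ ℝ)) (β : S →₀ ℝ) :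
    Combo (⇑e '' A) (e β) ↔ Combo A β := by
  constructor
  · intro h
    have h2 := combo_map e.symm _ _ h
    rw [e.symm_apply_apply] at h2
    have himg : (⇑e.symm) '' ((⇑e) '' A) = A := by
      rw [← Set.image_comp]
      simp [Function.comp_def]
    rwa [himg] at h2
  · exact combo_map e A β

lemma minset_map (e : (S →₀ ℝ) ≃ₗ[ℝ] (S →₀ ℝ)) (A : Set (S →₀ ℝ)) :
    MinSet (⇑e '' A) = ⇑e '' (MinSet A) := by
  ext γ
  constructor
  · rintro ⟨⟨β, hβ, rfl⟩, hnc⟩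
    exact ⟨β, ⟨hβ, fun hc => hnc ((combo_map_iff e A β).mpr hc)⟩, rfl⟩
  · rintro ⟨β, ⟨hβ, hnc⟩, rfl⟩
    exact ⟨⟨β, hβ, rfl⟩, fun hc => hnc ((combo_map_iff e A β).mp hc)⟩

lemma minset_phipos
    (hρ : ∀ (s : S) (v : S →₀ ℝ),
      ρ (cs.simple s) v = v - (2 * bform M (simpleRoot s) v) • simpleRoot s)
    (hρform : ∀ (w : W) (x y : S →₀ ℝ), bform M (ρ w x) (ρ w y) = bform M x y)
    (X : Set S) : MinSet (PhiPos cs ρ X) = simpleRoot '' X := by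
  classical
  ext β
  constructor
  · rintro ⟨hβ, hnc⟩
    by_contra hns
    apply hnc
    obtain ⟨hpos, hne, w, hw, i, hiX, heq⟩ := hβ
    refine ⟨β.support, fun x => simpleRoot x, fun x => β x, ?_, ?_⟩
    · intro x hx
      have hxX : x ∈ X := by
        by_contra hxX
        exact (Finsupp.mem_support_iff.mp hx)
          (phipos_support hρ ⟨hpos, hne, w, hw, i, hiX, heq⟩ x hxX)
      refine ⟨simple_mem_PhiPos hxX, ?_, hpos x⟩
      intro hsx
      exact hns ⟨x, hxX, hsx⟩
    · conv_rhs => rw [← Finsupp.sum_single β]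
      rw [Finsupp.sum]
      exact Finset.sum_congr rfl (fun x _ => by simp [simpleRoot, Finsupp.smul_single'])
  · rintro ⟨i, hiX, rfl⟩
    refine ⟨simple_mem_PhiPos hiX, ?_⟩
    rintro ⟨t, g, c, h1, h2⟩
    have hcoord : ∀ y : S, ∑ x ∈ t, c x * g x y = (simpleRoot i : S →₀ ℝ) y := by
      intro y
      rw [← h2, Finset.sum_apply']
      exact Finset.sum_congr rfl (fun x _ => by rw [Finsupp.smul_apply, smul_eq_mul])
    have hterm_nonneg : ∀ y : S, ∀ x ∈ t, 0 ≤ c x * g x y := by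
      intro y x hx
      exact mul_nonneg (h1 x hx).2.2 ((h1 x hx).1.1 y)
    have hxi : ∑ x ∈ t, c x * g x i = 1 := by
      rw [hcoord i, simpleRoot, Finsupp.single_eq_same]
    have hex0 : ∃ x₀ ∈ t, 0 < c x₀ * g x₀ i := by
      by_contra hcon
      push_neg at hcon
      have h4 : ∑ x ∈ t, c x * g x i ≤ 0 := Finset.sum_nonpos (fun x hx => hcon x hx)
      linarith
    obtain ⟨x₀, hx₀t, hx₀pos⟩ := hex0
    have hc₀ : 0 < c x₀ ∧ 0 < g x₀ i := by
      rcases mul_pos_iff.mp hx₀pos with h | h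
      · exact h
      · exact absurd (h1 x₀ hx₀t).2.2 (by linarith [h.1])
    have hoff : ∀ y, y ≠ i → g x₀ y = 0 := by
      intro y hy
      have hz : ∑ x ∈ t, c x * g x y = 0 := by
        rw [hcoord y, simpleRoot, Finsupp.single_apply, if_neg (fun h => hy h.symm)]
      have h0 : c x₀ * g x₀ y = 0 :=
        (Finset.sum_eq_zero_iff_of_nonneg (fun x hx => hterm_nonneg y x hx)).mp hz x₀ hx₀t
      exact (mul_eq_zero.mp h0).resolve_left hc₀.1.ne'
    have hrepr : g x₀ = Finsupp.single i (g x₀ i) := by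
      ext y
      rcases eq_or_ne y i with rfl | hy
      · rw [Finsupp.single_eq_same]
      · rw [Finsupp.single_apply, if_neg (fun h => hy h.symm)]
        exact hoff y hy
    have hnorm : bform M (g x₀) (g x₀) = 1 := by
      obtain ⟨_, _, w', hw', i', hi', heq'⟩ := (h1 x₀ hx₀t).1
      rw [← heq', hρform, bform_self]
    rw [hrepr, show (Finsupp.single i (g x₀ i) : S →₀ ℝ) = (g x₀ i) • simpleRoot i from by
      simp [simpleRoot, Finsupp.smul_single'], bform_smul_smul, bform_self, mul_one] at hnorm
    have hone : g x₀ i = 1 := by nlinarith [hc₀.2]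
    have hfin : g x₀ = simpleRoot i := by rw [hrepr, hone, simpleRoot]
    exact (h1 x₀ hx₀t).2.1 hfin


end Statement11Aux

/-- Let `u, v ∈ W` and `X, Y ⊆ S` be such that `u` is `(∅,X)`-minimal,
`v` is `(∅,Y)`-minimal, and `u W_X u⁻¹ = v W_Y v⁻¹`.  Then `u (Π_X) = v (Π_Y)`. -/
theorem statement11
    (M : CoxeterMatrix S) (cs : CoxeterSystem M W)
    (ρ : W →* ((S →₀ ℝ) ≃ₗ[ℝ] (S →₀ ℝ)))
    (hρ : ∀ (s : S) (v : S →₀ ℝ),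
      ρ (cs.simple s) v = v - (2 * bform M (simpleRoot s) v) • simpleRoot s)
    (hρinj : Function.Injective ρ)
    (hρform : ∀ (w : W) (x y : S →₀ ℝ), bform M (ρ w x) (ρ w y) = bform M x y)
    (u v : W) (X Y : Set S)
    (humin : ∀ g ∈ Subgroup.closure (cs.simple '' X), cs.length u ≤ cs.length (u * g))
    (hvmin : ∀ g ∈ Subgroup.closure (cs.simple '' Y), cs.length v ≤ cs.length (v * g))
    (hconj : Subgroup.map (MulAut.conj u).toMonoidHom (Subgroup.closure (cs.simple '' X)) =
      Subgroup.map (MulAut.conj v).toMonoidHom (Subgroup.closure (cs.simple '' Y))) :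
    ⇑(ρ u) '' (simpleRoot '' X) = ⇑(ρ v) '' (simpleRoot '' Y) := by
  have hset : ⇑(ρ u) '' (PhiPos cs ρ X) = ⇑(ρ v) '' (PhiPos cs ρ Y) :=
    Set.Subset.antisymm
      (phi_transfer hρ hρform u v X Y humin hvmin hconj)
      (phi_transfer hρ hρform v u Y X hvmin humin hconj.symm)
  calc ⇑(ρ u) '' (simpleRoot '' X)
      = ⇑(ρ u) '' (MinSet (PhiPos cs ρ X)) := by rw [minset_phipos hρ hρform X]
    _ = MinSet (⇑(ρ u) '' (PhiPos cs ρ X)) := (minset_map (ρ u) _).symm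
    _ = MinSet (⇑(ρ v) '' (PhiPos cs ρ Y)) := by rw [hset]
    _ = ⇑(ρ v) '' (MinSet (PhiPos cs ρ Y)) := minset_map (ρ v) _
    _ = ⇑(ρ v) '' (simpleRoot '' Y) := by rw [minset_phipos hρ hρform Y]
end
end
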